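/- Let r ≥ 1 be a natural number and let β : ℂ → ℂ be defined by β(s) = ∏_{i=0}^{2r-2} Λ(2s - i) / Λ(2s + 2r - 1 - 2i), where Λ is the completed Riemann zeta function. Then the function s ↦ β(s) / (s + 1/2) tends to -2·Λ(2r) as s tends to -1/2 within ℂ \ {-1/2}; in other words, β has a zero of order exactly one at s = -1/2 with first Taylor coefficient β_{2r,1}(-1/2) = -2·Λ(2r). -/

import Mathlib

open Complex Filter

lemma Lam_ne_zero {s : ℂ} (hs : 1 < s.re) : completedRiemannZeta s ≠ 0 := by
  intro h
  have h1 := riemannZeta_ne_zero_of_one_lt_re hs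
  rw [riemannZeta_def_of_ne_zero (ne_zero_of_one_lt_re hs), h, zero_div] at h1
  exact h1 rfl

lemma Lam_neg_nat (i : ℕ) : completedRiemannZeta (-1 - (i : ℂ)) =
    completedRiemannZeta ((i : ℂ) + 2) := by
  have := completedRiemannZeta_one_sub ((i : ℂ) + 2)
  rw [show (1 : ℂ) - ((i : ℂ) + 2) = -1 - i by ring] at this
  exact this

lemma prod_range_two_mul {M : Type*} [CommMonoid M] (n : ℕ) (f : ℕ → M) :
    ∏ i ∈ Finset.range (2 * n), f i = ∏ j ∈ Finset.range n, (f (2 * j) * f (2 * j + 1)) := by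
  induction n with
  | zero => simp
  | succ n ih =>
      rw [Finset.prod_range_succ, ← ih, show 2 * (n + 1) = (2 * n + 1) + 1 by ring,
        Finset.prod_range_succ, Finset.prod_range_succ, mul_assoc]

lemma key_prod (n : ℕ) :
    completedRiemannZeta (-1 - (n:ℂ)) *
      ∏ i ∈ (Finset.range (2*n+1)).erase n,
        (completedRiemannZeta (-1 - (i:ℂ)) /
         completedRiemannZeta ((2*(n:ℂ)) - 2*(i:ℂ))) =
    completedRiemannZeta (2*(n:ℂ) + 2) := by
  have hmem : n ∈ Finset.range (2*n+1) := by simp; omega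
  set Q : ℂ := ∏ i ∈ Finset.range (2*n), completedRiemannZeta ((i:ℂ) + 2) with hQ
  have hQne : Q ≠ 0 := by
    rw [hQ]
    apply Finset.prod_ne_zero_iff.mpr
    intro i _
    apply Lam_ne_zero
    simp only [add_re, natCast_re, re_ofNat]
    have : (0:ℝ) ≤ i := Nat.cast_nonneg i
    linarith
  -- numerator identity
  have hnum : completedRiemannZeta (-1 - (n:ℂ)) *
      ∏ i ∈ (Finset.range (2*n+1)).erase n, completedRiemannZeta (-1 - (i:ℂ)) =
      Q * completedRiemannZeta (2*(n:ℂ) + 2) := by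
    have h1 : (fun i : ℕ => completedRiemannZeta (-1 - (i:ℂ))) n *
        ∏ i ∈ (Finset.range (2*n+1)).erase n,
          completedRiemannZeta (-1 - (i:ℂ)) =
        ∏ i ∈ Finset.range (2*n+1), completedRiemannZeta (-1 - (i:ℂ)) :=
      Finset.mul_prod_erase _ (fun i : ℕ => completedRiemannZeta (-1 - (i:ℂ))) hmem
    rw [h1]
    have h2 : ∀ i ∈ Finset.range (2*n+1), completedRiemannZeta (-1 - (i:ℂ)) =
        completedRiemannZeta ((i:ℂ) + 2) := fun i _ => Lam_neg_nat i
    rw [Finset.prod_congr rfl h2, Finset.prod_range_succ, hQ,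
      show (((2*n : ℕ)) : ℂ) + 2 = 2*(n:ℂ) + 2 by push_cast; ring]
  -- denominator identity
  have hden : ∏ i ∈ (Finset.range (2*n+1)).erase n,
      completedRiemannZeta ((2*(n:ℂ)) - 2*(i:ℂ)) = Q := by
    have hE : (Finset.range (2*n+1)).erase n =
        Finset.range n ∪ Finset.Ico (n+1) (2*n+1) := by
      ext x
      simp only [Finset.mem_erase, Finset.mem_range, Finset.mem_union, Finset.mem_Ico]
      omega
    have hdisj : Disjoint (Finset.range n) (Finset.Ico (n+1) (2*n+1)) := by
      rw [Finset.disjoint_left]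
      intro a ha hb
      simp only [Finset.mem_range] at ha
      simp only [Finset.mem_Ico] at hb
      omega
    rw [hE, Finset.prod_union hdisj]
    have hlow : ∏ i ∈ Finset.range n,
        completedRiemannZeta ((2*(n:ℂ)) - 2*(i:ℂ)) =
        ∏ j ∈ Finset.range n, completedRiemannZeta (2*(j:ℂ) + 2) := by
      rw [← Finset.prod_range_reflect (fun i => completedRiemannZeta ((2*(n:ℂ)) - 2*(i:ℂ))) n]
      apply Finset.prod_congr rfl
      intro j hj
      simp only [Finset.mem_range] at hj
      congr 1
      have h1 : ((n - 1 - j : ℕ) : ℂ) = (n : ℂ) - 1 - j := by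
        have : (1:ℕ) + j ≤ n := by omega
        push_cast [Nat.cast_sub (by omega : 1 + j ≤ n), Nat.sub_sub]
        ring
      rw [h1]; ring
    have hhigh : ∏ i ∈ Finset.Ico (n+1) (2*n+1),
        completedRiemannZeta ((2*(n:ℂ)) - 2*(i:ℂ)) =
        ∏ j ∈ Finset.range n, completedRiemannZeta (2*(j:ℂ) + 3) := by
      rw [Finset.prod_Ico_eq_prod_range]
      have hc : 2*n+1 - (n+1) = n := by omega
      rw [hc]
      apply Finset.prod_congr rfl
      intro j _
      have harg : (2*(n:ℂ)) - 2*((n + 1 + j : ℕ) : ℂ) = 1 - (2*(j:ℂ) + 3) := by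
        push_cast; ring
      rw [harg, completedRiemannZeta_one_sub]
    rw [hlow, hhigh, hQ, ← Finset.prod_mul_distrib,
      prod_range_two_mul n (fun i => completedRiemannZeta ((i:ℂ) + 2))]
    apply Finset.prod_congr rfl
    intro j _
    congr 2 <;> push_cast <;> ring
  rw [Finset.prod_div_distrib, hden, mul_div_assoc', hnum, mul_comm Q,
    mul_div_assoc, div_self hQne, mul_one]


lemma neg_one_sub_nat_ne (i : ℕ) : ((-1 : ℂ) - (i:ℂ)) ≠ 0 ∧ ((-1:ℂ) - (i:ℂ)) ≠ 1 := by
  have hre : ((-1:ℂ) - (i:ℂ)).re = -1 - i := by simp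
  have hnn : (0:ℝ) ≤ i := Nat.cast_nonneg i
  constructor <;> intro h <;> apply_fun Complex.re at h <;> rw [hre] at h <;>
    simp at h <;> linarith

lemma Lam_contAt {s : ℂ} (h0 : s ≠ 0) (h1 : s ≠ 1) :
    ContinuousAt completedRiemannZeta s :=
  (differentiableAt_completedZeta h0 h1).continuousAt

lemma tendsto_Lam_comp {f : ℂ → ℂ} {c y : ℂ} (hf : Continuous f) (hfc : f c = y)
    (h0 : y ≠ 0) (h1 : y ≠ 1) (S : Set ℂ) :
    Tendsto (fun s => completedRiemannZeta (f s)) (nhdsWithin c S)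
      (nhds (completedRiemannZeta y)) := by
  have hL : ContinuousAt completedRiemannZeta (f c) := by
    rw [hfc]; exact Lam_contAt h0 h1
  have hcomp : ContinuousAt (fun s => completedRiemannZeta (f s)) c :=
    hL.comp hf.continuousAt
  have ht : Tendsto (fun s => completedRiemannZeta (f s)) (nhdsWithin c S)
      (nhds (completedRiemannZeta (f c))) := hcomp.continuousWithinAt.tendsto
  rwa [hfc] at ht

/-- The factor `β(s) = ∏_{i=0}^{2r-2} Λ(2s-i)/Λ(2s+2r-1-2i)` in the functional equation
of the spherical Siegel Eisenstein series on `O(2r,2r)` has a zero of order exactly one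
at `s = -1/2`, with first Taylor coefficient `β_{2r,1}(-1/2) = -2·Λ(2r)`. -/
theorem beta_simple_zero_at_neg_half (r : ℕ) (hr : 1 ≤ r) (β : ℂ → ℂ)
    (hβ : ∀ s : ℂ, β s = ∏ i ∈ Finset.range (2 * r - 1),
      completedRiemannZeta (2 * s - (i : ℂ)) /
        completedRiemannZeta (2 * s + 2 * (r : ℂ) - 1 - 2 * (i : ℂ))) :
    Tendsto (fun s : ℂ => β s / (s + 1 / 2))
      (nhdsWithin (-(1 / 2)) {(-(1 / 2) : ℂ)}ᶜ)
      (nhds (-2 * completedRiemannZeta (2 * (r : ℂ)))) := by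
  obtain ⟨n, rfl⟩ : ∃ n, r = n + 1 := ⟨r - 1, by omega⟩
  set c : ℂ := -(1/2) with hc
  have hrange : 2 * (n+1) - 1 = 2*n + 1 := by omega
  have hmem : n ∈ Finset.range (2*n+1) := by simp; omega
  have hden : ∀ s : ℂ, 2*s + 2*((n+1 : ℕ):ℂ) - 1 - 2*(n:ℂ) = 2*s + 1 := by
    intro s; push_cast; ring
  -- decomposition
  have hdecomp : ∀ s : ℂ, β s / (s + 1/2) =
      (completedRiemannZeta (2*s - (n:ℂ)) /
        ((s + 1/2) * completedRiemannZeta (2*s + 1))) *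
      ∏ i ∈ (Finset.range (2*n+1)).erase n, (completedRiemannZeta (2*s - (i:ℂ)) /
        completedRiemannZeta (2*s + 2*((n+1 : ℕ):ℂ) - 1 - 2*(i:ℂ))) := by
    intro s
    rw [hβ s, hrange, ← Finset.mul_prod_erase _ (fun i : ℕ =>
      completedRiemannZeta (2*s - (i:ℂ)) /
        completedRiemannZeta (2*s + 2*((n+1 : ℕ):ℂ) - 1 - 2*(i:ℂ))) hmem]
    rw [hden s]
    generalize completedRiemannZeta (2*s - (n:ℂ)) = a
    generalize completedRiemannZeta (2*s + 1) = b
    generalize (∏ i ∈ (Finset.range (2*n+1)).erase n,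
      completedRiemannZeta (2*s - (i:ℂ)) /
        completedRiemannZeta (2*s + 2*((n+1 : ℕ):ℂ) - 1 - 2*(i:ℂ))) = P
    rw [div_mul_eq_mul_div, div_div, div_mul_eq_mul_div, mul_comm b (s + 1/2)]
  -- the regularized pole factor
  have hg : Tendsto (fun s : ℂ => (s + 1/2) * completedRiemannZeta (2*s + 1))
      (nhdsWithin c {(c:ℂ)}ᶜ) (nhds (-(1/2) : ℂ)) := by
    have hcont : ContinuousAt (fun s : ℂ =>
        (s + 1/2) * completedRiemannZeta₀ (2*s + 1) - 1/2 + (s + 1/2)/(2*s)) c := by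
      have h2c : (2*c : ℂ) ≠ 0 := by rw [hc]; norm_num
      apply ContinuousAt.add
      · apply ContinuousAt.sub _ continuousAt_const
        exact (continuousAt_id.add continuousAt_const).mul
          ((differentiable_completedZeta₀.continuous.comp
            (by continuity : Continuous fun s : ℂ => 2*s+1)).continuousAt)
      · exact (continuousAt_id.add continuousAt_const).div
          (continuousAt_const.mul continuousAt_id) h2c
    have hval : (c + 1/2) * completedRiemannZeta₀ (2*c + 1) - 1/2 + (c + 1/2)/(2*c)
        = -(1/2) := by
      rw [hc]; norm_num
    have h1 : Tendsto (fun s : ℂ =>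
        (s + 1/2) * completedRiemannZeta₀ (2*s + 1) - 1/2 + (s + 1/2)/(2*s))
        (nhdsWithin c {(c:ℂ)}ᶜ) (nhds (-(1/2) : ℂ)) := by
      rw [← hval]
      exact (hcont.continuousWithinAt).tendsto
    apply h1.congr'
    filter_upwards [self_mem_nhdsWithin] with s hs
    have hs' : s + 1/2 ≠ 0 := by
      intro h
      apply hs
      simp only [Set.mem_singleton_iff]
      rw [hc]; linear_combination h
    have key : (s + 1/2)/(2*s + 1) = 1/2 := by
      rw [show (2*s + 1 : ℂ) = 2*(s + 1/2) by ring, mul_comm, ← div_div,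
        div_self hs']
    rw [completedRiemannZeta_eq, show (1:ℂ) - (2*s+1) = -(2*s) by ring]
    rw [one_div (-(2*s)), inv_neg, ← one_div]
    linear_combination key
  -- pivot factor tendsto
  have h0n := neg_one_sub_nat_ne n
  have hpiv : Tendsto (fun s : ℂ => completedRiemannZeta (2*s - (n:ℂ)) /
      ((s + 1/2) * completedRiemannZeta (2*s + 1))) (nhdsWithin c {(c:ℂ)}ᶜ)
      (nhds (completedRiemannZeta (-1 - (n:ℂ)) / (-(1/2)))) :=
    (tendsto_Lam_comp (f := fun s : ℂ => 2*s - (n:ℂ)) (by fun_prop)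
      (by rw [hc]; ring) h0n.1 h0n.2 _).div hg (by norm_num)
  -- the erased product tendsto
  have hprod : Tendsto (fun s : ℂ => ∏ i ∈ (Finset.range (2*n+1)).erase n,
      (completedRiemannZeta (2*s - (i:ℂ)) /
        completedRiemannZeta (2*s + 2*((n+1 : ℕ):ℂ) - 1 - 2*(i:ℂ))))
      (nhdsWithin c {(c:ℂ)}ᶜ)
      (nhds (∏ i ∈ (Finset.range (2*n+1)).erase n,
        (completedRiemannZeta (-1 - (i:ℂ)) /
          completedRiemannZeta ((2*(n:ℂ)) - 2*(i:ℂ))))) := by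
    apply tendsto_finset_prod
    intro i hi
    obtain ⟨hin, hirange⟩ : i ≠ n ∧ i < 2*n+1 := by
      simpa [Finset.mem_erase, Finset.mem_range] using hi
    have h0i := neg_one_sub_nat_ne i
    have hnum := tendsto_Lam_comp (c := c) (f := fun s : ℂ => 2*s - (i:ℂ)) (by fun_prop)
      (by rw [hc]; ring) h0i.1 h0i.2 ({(c:ℂ)}ᶜ)
    have hb0 : ((2*(n:ℂ)) - 2*(i:ℂ)) ≠ 0 := by
      intro h
      have hni : (n:ℂ) = i := by linear_combination h/2
      exact hin (Nat.cast_inj.mp hni).symm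
    have hb1 : ((2*(n:ℂ)) - 2*(i:ℂ)) ≠ 1 := by
      intro h
      have h' : ((2*(n:ℤ) - 2*(i:ℤ) : ℤ) : ℂ) = ((1:ℤ) : ℂ) := by
        push_cast
        linear_combination h
      have := Int.cast_injective (α := ℂ) h'
      omega
    have hdent := tendsto_Lam_comp (c := c)
      (f := fun s : ℂ => 2*s + 2*((n+1 : ℕ):ℂ) - 1 - 2*(i:ℂ)) (by fun_prop)
      (by rw [hc]; push_cast; ring) hb0 hb1 ({(c:ℂ)}ᶜ)
    have hbne : completedRiemannZeta ((2*(n:ℂ)) - 2*(i:ℂ)) ≠ 0 := by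
      rcases lt_or_gt_of_ne hin.symm with hlt | hgt
      · -- n < i : reflect
        rw [← completedRiemannZeta_one_sub ((2*(n:ℂ)) - 2*(i:ℂ))]
        rw [show (1:ℂ) - ((2*(n:ℂ)) - 2*(i:ℂ)) = ((2*(i-n)+1 : ℕ):ℂ) by
          push_cast [Nat.cast_sub hlt.le]; ring]
        apply Lam_ne_zero
        rw [natCast_re]
        exact_mod_cast (by omega : 1 < 2*(i-n)+1)
      · -- i < n
        rw [show (2*(n:ℂ)) - 2*(i:ℂ) = ((2*(n-i) : ℕ):ℂ) by
          push_cast [Nat.cast_sub hgt.le]; ring]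
        apply Lam_ne_zero
        rw [natCast_re]
        exact_mod_cast (by omega : 1 < 2*(n-i))
    exact hnum.div hdent hbne
  have hmain := hpiv.mul hprod
  have hval2 : completedRiemannZeta (-1 - (n:ℂ)) / (-(1/2)) *
      ∏ i ∈ (Finset.range (2*n+1)).erase n,
        (completedRiemannZeta (-1 - (i:ℂ)) /
          completedRiemannZeta ((2*(n:ℂ)) - 2*(i:ℂ))) =
      -2 * completedRiemannZeta (2 * ((n+1 : ℕ):ℂ)) := by
    rw [show completedRiemannZeta (-1-(n:ℂ)) / (-(1/2))
        = -2 * completedRiemannZeta (-1-(n:ℂ)) by ring]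
    rw [mul_assoc, key_prod n, show 2*((n+1:ℕ):ℂ) = 2*(n:ℂ)+2 by push_cast; ring]
  rw [hval2] at hmain
  exact hmain.congr fun s => (hdecomp s).symm
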